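/- If P = {(A_i, B_i) : i in [m]} is a skew Bollobás system of subsets of [n] (i.e., A_i ∩ B_i = ∅ for all i and A_i ∩ B_j ≠ ∅ for all i < j) with |A_i| = a and |B_i| = b for all i, then m ≤ binom(a+b, a). -/
import Mathlib

open ExteriorAlgebra

section Aux

variable {K : Type*} [Field K]

/-- composing a function with `Fin.append`. -/
lemma fin_comp_append {α β : Type*} {p q : ℕ} (f : α → β) (u : Fin p → α) (w : Fin q → α) :
    f ∘ Fin.append u w = Fin.append (f ∘ u) (f ∘ w) := by
  funext k
  refine Fin.addCases (fun k => ?_) (fun k => ?_) k <;>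
    simp [Fin.append_left, Fin.append_right]

lemma iMulti_mul {M : Type*} [AddCommGroup M] [Module K M] {p q : ℕ}
    (u : Fin p → M) (w : Fin q → M) :
    (ιMulti K p u : ExteriorAlgebra K M) * ιMulti K q w = ιMulti K (p + q) (Fin.append u w) := by
  rw [ιMulti_apply, ιMulti_apply, ιMulti_apply, ← List.prod_append, ← List.ofFn_fin_append]
  congr 1
  have : (fun i => ExteriorAlgebra.ι K (Fin.append u w i))
      = (ExteriorAlgebra.ι K (M := M)) ∘ Fin.append u w := rfl
  rw [this, fin_comp_append]
  rfl

/-- every wedge of `a` vectors lies in the span of the wedges of standard basis vectors indexed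
by `a`-subsets. -/
lemma wedge_mem_span (d a : ℕ) (w : Fin a → (Fin d → K)) :
    ιMulti K a w ∈ Submodule.span K (Set.range
      (fun S : {S : Finset (Fin d) // S.card = a} =>
        (ιMulti K a fun k => Pi.single ((S.1.orderIsoOfFin S.2 k : Fin d)) (1 : K)
          : ExteriorAlgebra K (Fin d → K)))) := by
  classical
  set bv : Fin d → (Fin d → K) := fun r => Pi.single r (1 : K) with hbv
  set Bf : {S : Finset (Fin d) // S.card = a} → ExteriorAlgebra K (Fin d → K) :=
    fun S => ιMulti K a fun k => bv ((S.1.orderIsoOfFin S.2 k : Fin d)) with hBf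
  show ιMulti K a w ∈ Submodule.span K (Set.range Bf)
  have hw : w = fun k => ∑ r, w k r • bv r := by
    funext k
    have h1 : ∀ r, w k r • bv r = Pi.single r (w k r) := fun r => by
      rw [hbv, ← Pi.single_smul, smul_eq_mul, mul_one]
    simp_rw [h1]
    exact (Finset.univ_sum_single (w k)).symm
  have expand := MultilinearMap.map_sum
    ((ιMulti K a (M := Fin d → K)).toMultilinearMap) (g := fun k r => w k r • bv r)
  rw [show ((ιMulti K a (M := Fin d → K)).toMultilinearMap : _) = ⇑(ιMulti K a (M := Fin d → K))
    from rfl] at expand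
  rw [hw, expand]
  apply Submodule.sum_mem
  intro r _
  have hsmul := MultilinearMap.map_smul_univ
    ((ιMulti K a (M := Fin d → K)).toMultilinearMap) (fun k => w k (r k)) (fun k => bv (r k))
  rw [show ((ιMulti K a (M := Fin d → K)).toMultilinearMap : _) = ⇑(ιMulti K a (M := Fin d → K))
    from rfl] at hsmul
  rw [hsmul]
  apply Submodule.smul_mem
  by_cases hinj : Function.Injective r
  · set S : Finset (Fin d) := Finset.image r Finset.univ with hSdef
    have hS : S.card = a := by
      rw [hSdef, Finset.card_image_of_injective _ hinj, Finset.card_univ, Fintype.card_fin]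
    have hmem : ∀ k, r k ∈ S := fun k => Finset.mem_image_of_mem r (Finset.mem_univ k)
    set τ : Fin a → Fin a := fun k => (S.orderIsoOfFin hS).symm ⟨r k, hmem k⟩ with hτ
    have hτinj : Function.Injective τ := by
      intro k1 k2 h
      apply hinj
      have := congrArg (fun z => ((S.orderIsoOfFin hS) z : Fin d)) h
      simpa [hτ] using this
    have hbij := (Finite.injective_iff_bijective).1 hτinj
    set e : Equiv.Perm (Fin a) := Equiv.ofBijective τ hbij with he
    have hcomp : (fun k => bv (r k))
        = (fun k => bv ((S.orderIsoOfFin hS k : Fin d))) ∘ e := by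
      funext k
      show bv (r k) = bv ((S.orderIsoOfFin hS (τ k) : Fin d))
      simp [hτ]
    rw [hcomp, AlternatingMap.map_perm]
    rcases Int.units_eq_one_or (Equiv.Perm.sign e) with hs | hs <;> rw [hs]
    · rw [one_smul]
      exact Submodule.subset_span ⟨⟨S, hS⟩, rfl⟩
    · rw [Units.smul_def, Units.val_neg, Units.val_one, neg_smul, one_smul]
      exact Submodule.neg_mem _ (Submodule.subset_span ⟨⟨S, hS⟩, rfl⟩)
  · rw [Function.not_injective_iff] at hinj
    obtain ⟨k1, k2, hval, hne⟩ := hinj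
    rw [(ιMulti K a).map_eq_zero_of_eq (fun k => bv (r k)) (congrArg bv hval) hne]
    exact Submodule.zero_mem _

lemma fin_append_injective {α : Type*} {p q : ℕ} {u : Fin p → α} {w : Fin q → α}
    (hu : Function.Injective u) (hw : Function.Injective w)
    (huw : ∀ k l, u k ≠ w l) : Function.Injective (Fin.append u w) := by
  intro x y
  refine Fin.addCases (fun x' => ?_) (fun x' => ?_) x <;>
    refine Fin.addCases (fun y' => ?_) (fun y' => ?_) y <;>
      intro h <;>
        simp only [Fin.append_left, Fin.append_right] at h
  · exact congrArg (Fin.castAdd q) (hu h)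
  · exact absurd h (huw x' y')
  · exact absurd h.symm (huw y' x')
  · exact congrArg (Fin.natAdd p) (hw h)

end Aux


theorem skew_bollobas_uniform (n m a b : ℕ)
    (A B : Fin m → Finset (Fin n))
    (hdisj : ∀ i, Disjoint (A i) (B i))
    (hcross : ∀ i j, i < j → (A i ∩ B j).Nonempty)
    (hA : ∀ i, (A i).card = a) (hB : ∀ i, (B i).card = b) :
    m ≤ (a + b).choose a := by
  classical
  set d := a + b with hd
  -- the Vandermonde vectors
  set v : Fin n → (Fin d → ℚ) := fun x r => (x : ℚ) ^ (r : ℕ) with hv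
  -- sorted enumerations of the sets
  set sA : ∀ i : Fin m, Fin a → Fin n := fun i k => ((A i).orderIsoOfFin (hA i) k : Fin n)
    with hsA
  set sB : ∀ i : Fin m, Fin b → Fin n := fun i k => ((B i).orderIsoOfFin (hB i) k : Fin n)
    with hsB
  set f : Fin m → ExteriorAlgebra ℚ (Fin d → ℚ) := fun i => ιMulti ℚ a (v ∘ sA i) with hf
  set g : Fin m → ExteriorAlgebra ℚ (Fin d → ℚ) := fun j => ιMulti ℚ b (v ∘ sB j) with hg
  -- the functional given by the determinant in top degree
  set Φ : ∀ k : ℕ, (Fin d → ℚ) [⋀^Fin k]→ₗ[ℚ] ℚ := fun k =>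
    if h : k = d then (Matrix.detRowAlternating (R := ℚ) (n := Fin d)).domDomCongr
      (finCongr h.symm) else 0 with hΦ
  set L : ExteriorAlgebra ℚ (Fin d → ℚ) →ₗ[ℚ] ℚ := liftAlternating Φ with hL
  have hLtop : ∀ w : Fin d → (Fin d → ℚ), L (ιMulti ℚ d w) = (Matrix.of w).det := by
    intro w
    rw [hL, liftAlternating_apply_ιMulti, hΦ]
    simp only [dif_pos]
    show Matrix.detRowAlternating (w ∘ (finCongr (Eq.symm rfl))) = _
    have : w ∘ (finCongr (Eq.symm (rfl : d = d))) = w := funext fun i => congrArg w (Fin.ext rfl)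
    rw [this]
    rfl
  -- products of wedges
  have hprod : ∀ i j, f i * g j = ιMulti ℚ d (Fin.append (v ∘ sA i) (v ∘ sB j)) := by
    intro i j
    rw [hf, hg]
    exact iMulti_mul _ _
  -- strict upper triangular vanishing
  have hzero : ∀ i j, i < j → f i * g j = 0 := by
    intro i j hij
    obtain ⟨x, hx⟩ := hcross i j hij
    rw [Finset.mem_inter] at hx
    rw [hprod]
    set k1 : Fin a := ((A i).orderIsoOfFin (hA i)).symm ⟨x, hx.1⟩ with hk1
    set k2 : Fin b := ((B j).orderIsoOfFin (hB j)).symm ⟨x, hx.2⟩ with hk2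
    refine (ιMulti ℚ d).map_eq_zero_of_eq
      (Fin.append (v ∘ sA i) (v ∘ sB j)) (i := Fin.castAdd b k1) (j := Fin.natAdd a k2) ?_ ?_
    · rw [Fin.append_left, Fin.append_right]
      show v (sA i k1) = v (sB j k2)
      rw [hsA, hsB, hk1, hk2]
      simp
    · intro hcontra
      have h1 := congrArg Fin.val hcontra
      simp only [Fin.coe_castAdd, Fin.coe_natAdd] at h1
      omega
  -- the diagonal is nonzero
  have hdiag : ∀ i, L (f i * g i) ≠ 0 := by
    intro i
    rw [hprod]
    set c : Fin d → ℚ := fun p => ((Fin.append (sA i) (sB i) p : Fin n) : ℚ) with hc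
    have hcinj : Function.Injective c := by
      intro p q hpq
      have hval : (Fin.append (sA i) (sB i) p : Fin n) = (Fin.append (sA i) (sB i) q : Fin n) := by
        have := Nat.cast_injective (R := ℚ) (congrArg id hpq)
        exact Fin.ext this
      -- injectivity of the appended enumeration
      have happinj : Function.Injective (Fin.append (sA i) (sB i)) := by
        apply fin_append_injective
        · intro k1 k2 h12
          exact ((A i).orderIsoOfFin (hA i)).injective (Subtype.ext h12)
        · intro k1 k2 h12
          exact ((B i).orderIsoOfFin (hB i)).injective (Subtype.ext h12)
        · intro k l hkl
          have hmemA : sA i k ∈ A i := by rw [hsA]; simp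
          have hmemB : sB i l ∈ B i := by rw [hsB]; simp
          rw [hkl] at hmemA
          exact (Finset.disjoint_left.1 (hdisj i) hmemA) hmemB
      exact happinj hval
    have hmatrix : Fin.append (v ∘ sA i) (v ∘ sB i) = fun p => v (Fin.append (sA i) (sB i) p) := by
      rw [← fin_comp_append v (sA i) (sB i)]
      rfl
    rw [hmatrix, hLtop]
    have : (Matrix.of fun p => v (Fin.append (sA i) (sB i) p)) = Matrix.vandermonde c := by
      ext p q
      rfl
    rw [this, Matrix.det_vandermonde]
    apply Finset.prod_ne_zero_iff.2
    intro p _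
    apply Finset.prod_ne_zero_iff.2
    intro q hq
    rw [Finset.mem_Ioi] at hq
    exact sub_ne_zero_of_ne fun hpq => absurd (hcinj hpq) (ne_of_gt hq)
  -- linear independence
  have hind : LinearIndependent ℚ f := by
    rw [Fintype.linearIndependent_iff]
    intro cf hcf
    by_contra hcon
    push_neg at hcon
    obtain ⟨i0, hi0⟩ := hcon
    set s : Finset (Fin m) := Finset.univ.filter (fun i => cf i ≠ 0) with hs
    have hsne : s.Nonempty := ⟨i0, by rw [hs]; simp [hi0]⟩
    set j := s.max' hsne with hj
    have hjs : j ∈ s := s.max'_mem hsne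
    have hcj : cf j ≠ 0 := (Finset.mem_filter.1 hjs).2
    have hsum : ∑ i, cf i • L (f i * g j) = 0 := by
      have h0 := congrArg (fun x => L (x * g j)) hcf
      simp only [Finset.sum_mul, smul_mul_assoc, map_sum, map_smul, zero_mul, map_zero] at h0
      exact h0
    rw [Finset.sum_eq_single j (fun i _ hij => ?_) (fun h => absurd (Finset.mem_univ j) h)]
      at hsum
    · exact smul_ne_zero hcj (hdiag j) hsum
    · by_cases hci : cf i = 0
      · rw [hci, zero_smul]
      · have his : i ∈ s := by rw [hs]; simp [hci]
        have : i < j := lt_of_le_of_ne (s.le_max' i his) hij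
        rw [hzero i j this, map_zero, smul_zero]
  -- the span bound
  set Bf : {S : Finset (Fin d) // S.card = a} → ExteriorAlgebra ℚ (Fin d → ℚ) :=
    fun S => ιMulti ℚ a fun k => Pi.single ((S.1.orderIsoOfFin S.2 k : Fin d)) (1 : ℚ) with hBf
  set P : Submodule ℚ (ExteriorAlgebra ℚ (Fin d → ℚ)) := Submodule.span ℚ (Set.range Bf)
    with hP
  have hfP : ∀ i, f i ∈ P := fun i => wedge_mem_span d a (v ∘ sA i)
  set f' : Fin m → P := fun i => ⟨f i, hfP i⟩ with hf'
  have hind' : LinearIndependent ℚ f' := by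
    apply LinearIndependent.of_comp P.subtype
    exact hind
  have : FiniteDimensional ℚ P := FiniteDimensional.span_of_finite ℚ (Set.finite_range Bf)
  have hcard := hind'.fintype_card_le_finrank
  rw [Fintype.card_fin] at hcard
  refine hcard.trans ?_
  have hfr : Module.finrank ℚ P ≤ Fintype.card {S : Finset (Fin d) // S.card = a} :=
    finrank_range_le_card Bf
  rw [Fintype.card_finset_len, Fintype.card_fin] at hfr
  exact hfr
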